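/- Let u : ℝ → ℝ be a C² function with u(s) ≥ 0 and u''(s) ≥ 2·u(s)² for all s ∈ ℝ. Then u is identically zero. -/

import Mathlib

open Set Real

lemma aux_blowup (u : ℝ → ℝ) (hu : ContDiff ℝ 2 u)
    (hnonneg : ∀ s, 0 ≤ u s)
    (hineq : ∀ s, deriv (deriv u) s ≥ 2 * (u s) ^ 2)
    (s₁ : ℝ) (hd : 0 < deriv u s₁) : False := by
  have hd1 : Differentiable ℝ u := hu.differentiable (by norm_num)
  have hcd1 : ContDiff ℝ 1 (deriv u) :=
    (contDiff_succ_iff_deriv.mp (show ContDiff ℝ (1+1) u by exact_mod_cast hu)).2.2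
  have hd2 : Differentiable ℝ (deriv u) := hcd1.differentiable one_ne_zero
  set d := deriv u s₁ with hdd
  -- u' monotone
  have hmono : Monotone (deriv u) := by
    apply monotone_of_deriv_nonneg hd2
    intro x
    have := hineq x
    nlinarith [sq_nonneg (u x)]
  have hd' : ∀ s, s₁ ≤ s → d ≤ deriv u s := fun s hs => hmono hs
  -- u monotone on Ici s₁
  have humono : MonotoneOn u (Ici s₁) := by
    apply monotoneOn_of_deriv_nonneg (convex_Ici s₁) hd1.continuous.continuousOn
      hd1.differentiableOn
    intro x hx
    rw [interior_Ici] at hx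
    exact le_trans hd.le (hd' x (le_of_lt hx))
  -- linear lower bound: u s ≥ u s₁ + d * (s - s₁) on Ici s₁
  have hlin : ∀ s, s₁ ≤ s → u s₁ + d * (s - s₁) ≤ u s := by
    intro s hs
    have hgder : ∀ x : ℝ, HasDerivAt (fun t => u t - d * t) (deriv u x - d) x := by
      intro x
      exact ((hd1 x).hasDerivAt.sub ((hasDerivAt_id x).const_mul d)).congr_deriv (by simp)
    have hg : MonotoneOn (fun t => u t - d * t) (Ici s₁) := by
      apply monotoneOn_of_deriv_nonneg (convex_Ici s₁)
        (fun x _ => (hgder x).continuousAt.continuousWithinAt)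
        (fun x _ => (hgder x).differentiableAt.differentiableWithinAt)
      intro x hx
      rw [interior_Ici] at hx
      rw [(hgder x).deriv]
      have := hd' x hx.le
      linarith
    have := hg (self_mem_Ici) (mem_Ici.mpr hs) hs
    simp only at this
    linarith
  -- Energy monotone on Ici s₁
  set E : ℝ → ℝ := fun s => (deriv u s)^2 - (4/3) * (u s)^3 with hE
  have hEder : ∀ x, HasDerivAt E (2 * deriv u x * deriv (deriv u) x
      - (4/3) * (3 * (u x)^2 * deriv u x)) x := by
    intro x
    have h1 : HasDerivAt (fun s => (deriv u s)^2) (2 * deriv u x * deriv (deriv u) x) x := by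
      have := ((hd2 x).hasDerivAt.pow 2)
      exact this.congr_deriv (by simp)
    have h2 : HasDerivAt (fun s => (4/3 : ℝ) * (u s)^3) ((4/3) * (3 * (u x)^2 * deriv u x)) x := by
      have := ((hd1 x).hasDerivAt.pow 3).const_mul (4/3 : ℝ)
      simpa [mul_comm, mul_assoc, mul_left_comm] using this
    exact h1.sub h2
  have hEmono : MonotoneOn E (Ici s₁) := by
    apply monotoneOn_of_deriv_nonneg (convex_Ici s₁)
      (fun x _ => ((hEder x).continuousAt.continuousWithinAt))
      (fun x _ => ((hEder x).differentiableAt.differentiableWithinAt))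
    intro x hx
    rw [interior_Ici] at hx
    rw [(hEder x).deriv]
    have h1 := hd' x hx.le
    have h2 := hineq x
    nlinarith [hnonneg x]
  -- choose s₂
  set s₂ : ℝ := s₁ + (u s₁ + 1) / d with hs₂
  have hs12 : s₁ ≤ s₂ := by
    have h0 : 0 ≤ (u s₁ + 1) / d := div_nonneg (by linarith [hnonneg s₁]) hd.le
    rw [hs₂]; linarith
  have hu2 : 2 * u s₁ + 1 ≤ u s₂ := by
    have : u s₁ + d * ((u s₁ + 1) / d) ≤ u s₂ := by
      simpa [hs₂] using hlin s₂ hs12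
    rw [mul_div_cancel₀ _ (ne_of_gt hd)] at this
    linarith
  -- key pointwise bound on Ici s₂ : u ≥ 1, u' ≥ (2/3) u √u
  have hkey : ∀ s, s₂ ≤ s → 1 ≤ u s ∧ (2/3) * u s * Real.sqrt (u s) ≤ deriv u s := by
    intro s hs
    have hus2 : u s₂ ≤ u s := humono (mem_Ici.mpr hs12) (mem_Ici.mpr (hs12.trans hs)) hs
    have hu1 : 1 ≤ u s := by linarith [hnonneg s₁]
    refine ⟨hu1, ?_⟩
    have hEs := hEmono (self_mem_Ici) (mem_Ici.mpr (hs12.trans hs)) (hs12.trans hs)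
    -- E s₁ ≤ E s
    have hpow : (2 * u s₁ + 1)^3 ≤ (u s)^3 :=
      pow_le_pow_left₀ (by linarith [hnonneg s₁]) (by linarith) 3
    have hcube : 2 * (u s₁)^3 ≤ (u s)^3 := by
      nlinarith [hnonneg s₁, pow_nonneg (hnonneg s₁) 3, sq_nonneg (u s₁)]
    have hEs' : (deriv u s₁)^2 - (4/3) * (u s₁)^3 ≤ (deriv u s)^2 - (4/3) * (u s)^3 := hEs
    have hsq : (2/3) * (u s)^3 ≤ (deriv u s)^2 := by
      nlinarith [sq_nonneg (deriv u s₁)]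
    have hds : 0 < deriv u s := lt_of_lt_of_le hd (hd' s ((hs12.trans hs)))
    have hsqrt : Real.sqrt (u s) ^ 2 = u s := Real.sq_sqrt (hnonneg s)
    have hsnn : 0 ≤ Real.sqrt (u s) := Real.sqrt_nonneg _
    have hL : ((2/3) * u s * Real.sqrt (u s))^2 = 4/9 * (u s)^2 * (Real.sqrt (u s))^2 := by ring
    rw [hsqrt] at hL
    have hL2 : ((2/3) * u s * Real.sqrt (u s))^2 ≤ (deriv u s)^2 := by
      rw [hL]; nlinarith [pow_nonneg (hnonneg s) 3]
    nlinarith [hL2, hds, sq_nonneg ((2/3) * u s * Real.sqrt (u s) - deriv u s)]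
  -- the function f = 1/√u + s/3 is antitone on Ici s₂
  set f : ℝ → ℝ := fun s => (Real.sqrt (u s))⁻¹ + s / 3 with hf
  have hfder : ∀ s, s₂ ≤ s → HasDerivAt f
      (-(deriv u s / (2 * Real.sqrt (u s))) / (Real.sqrt (u s))^2 + 1/3) s := by
    intro s hs
    have hu1 := (hkey s hs).1
    have hne : u s ≠ 0 := by linarith
    have h1 : HasDerivAt (fun t => Real.sqrt (u t)) (deriv u s / (2 * Real.sqrt (u s))) s :=
      (hd1 s).hasDerivAt.sqrt hne
    have hsne : Real.sqrt (u s) ≠ 0 := by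
      have : (1:ℝ) ≤ Real.sqrt (u s) := by
        rw [show (1:ℝ) = Real.sqrt 1 by simp]
        exact Real.sqrt_le_sqrt hu1
      linarith
    have h2 := h1.inv hsne
    have h3 : HasDerivAt (fun t : ℝ => t / 3) (1/3 : ℝ) s := by
      simpa using (hasDerivAt_id s).div_const 3
    exact h2.add h3
  have hfanti : AntitoneOn f (Ici s₂) := by
    apply antitoneOn_of_deriv_nonpos (convex_Ici s₂)
      (fun x hx => ((hfder x hx).continuousAt.continuousWithinAt))
      (fun x hx => ((hfder x (interior_subset hx)).differentiableAt.differentiableWithinAt))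
    intro x hx
    rw [interior_Ici] at hx
    rw [(hfder x hx.le).deriv]
    obtain ⟨hu1, hkb⟩ := hkey x hx.le
    have hsq : Real.sqrt (u x) ^ 2 = u x := Real.sq_sqrt (hnonneg x)
    have hs1 : (1:ℝ) ≤ Real.sqrt (u x) := by
      rw [show (1:ℝ) = Real.sqrt 1 by simp]; exact Real.sqrt_le_sqrt hu1
    have h0 : (0:ℝ) < Real.sqrt (u x) := by linarith
    rw [hsq]
    have hpos : (0:ℝ) < 2 * Real.sqrt (u x) * u x := by nlinarith
    have h2 : (1:ℝ)/3 ≤ deriv u x / (2 * Real.sqrt (u x)) / u x := by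
      rw [div_div, le_div_iff₀ hpos]
      calc 1/3 * (2 * Real.sqrt (u x) * u x) = (2/3) * u x * Real.sqrt (u x) := by ring
        _ ≤ deriv u x := hkb
    rw [neg_div]
    linarith
  -- conclude
  set s₃ : ℝ := s₂ + 3 * (Real.sqrt (u s₂))⁻¹ + 3 with hs₃
  have hw2 : 0 ≤ (Real.sqrt (u s₂))⁻¹ := inv_nonneg.mpr (Real.sqrt_nonneg _)
  have hs23 : s₂ ≤ s₃ := by rw [hs₃]; linarith
  have hff : (Real.sqrt (u s₃))⁻¹ + s₃ / 3 ≤ (Real.sqrt (u s₂))⁻¹ + s₂ / 3 :=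
    hfanti self_mem_Ici (mem_Ici.mpr hs23) hs23
  have hw3 : 0 ≤ (Real.sqrt (u s₃))⁻¹ := inv_nonneg.mpr (Real.sqrt_nonneg _)
  rw [hs₃] at hff
  linarith

theorem one_dim_elliptic_ineq_vanishes
    (u : ℝ → ℝ) (hu : ContDiff ℝ 2 u)
    (hnonneg : ∀ s, 0 ≤ u s)
    (hineq : ∀ s, deriv (deriv u) s ≥ 2 * (u s) ^ 2) :
    ∀ s, u s = 0 := by
  have hd1 : Differentiable ℝ u := hu.differentiable (by norm_num)
  have hcd1 : ContDiff ℝ 1 (deriv u) :=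
    (contDiff_succ_iff_deriv.mp (show ContDiff ℝ (1+1) u by exact_mod_cast hu)).2.2
  have hd2 : Differentiable ℝ (deriv u) := hcd1.differentiable one_ne_zero
  -- the reflected function
  set v : ℝ → ℝ := fun s => u (-s) with hv
  have hvc : ContDiff ℝ 2 v := hu.comp contDiff_neg
  have hvd : ∀ s, HasDerivAt v (-(deriv u (-s))) s := by
    intro s
    have := ((hd1 (-s)).hasDerivAt.comp s (hasDerivAt_neg s))
    exact this.congr_deriv (by ring)
  have hvderiv : deriv v = fun s => -(deriv u (-s)) := funext fun s => (hvd s).deriv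
  have hvd2 : ∀ s, deriv (deriv v) s = deriv (deriv u) (-s) := by
    intro s
    rw [hvderiv]
    have : HasDerivAt (fun t => -(deriv u (-t))) (deriv (deriv u) (-s)) s := by
      have := (((hd2 (-s)).hasDerivAt.comp s (hasDerivAt_neg s))).neg
      exact this.congr_deriv (by ring)
    exact this.deriv
  have hvineq : ∀ s, deriv (deriv v) s ≥ 2 * (v s) ^ 2 := by
    intro s
    rw [hvd2]
    exact hineq (-s)
  have hvnonneg : ∀ s, 0 ≤ v s := fun s => hnonneg (-s)
  -- deriv u vanishes
  have hderiv0 : ∀ s, deriv u s = 0 := by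
    intro s
    rcases lt_trichotomy (deriv u s) 0 with h | h | h
    · exfalso
      apply aux_blowup v hvc hvnonneg hvineq (-s)
      rw [hvderiv]
      simp only [neg_neg]
      linarith
    · exact h
    · exact absurd (aux_blowup u hu hnonneg hineq s h) id
  have hz : deriv u = fun _ => (0:ℝ) := funext hderiv0
  intro s
  have h0 : deriv (deriv u) s = 0 := by rw [hz]; simp
  have := hineq s
  rw [h0] at this
  nlinarith [hnonneg s]
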